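/- arXiv:1108.0164 — 3 statements merged into one kernel-verified Lean document; each statement's English description precedes it below -/
import Mathlib

section
/- Let G be a group and M = G'/G'' its Alexander invariant. For any x, y, z ∈ G the Jacobian relation (t_x − 1)·[y,z] + (t_y − 1)·[z,x] + (t_z − 1)·[x,y] = 0 holds in M. -/
open scoped commutatorElement
theorem comm_mem'' {G : Type*} [Group G] (a b : G) : ⁅a, b⁆ ∈ commutator G :=
  Subgroup.commutator_mem_commutator (Subgroup.mem_top a) (Subgroup.mem_top b)

theorem conj_comm_mem'' {G : Type*} [Group G] (g a b : G) :
    g * ⁅a, b⁆ * g⁻¹ ∈ commutator G :=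
  (Subgroup.commutator_normal ⊤ ⊤).conj_mem _ (comm_mem'' a b) g

/-- the Jacobian relation
`(t_x − 1)·[y,z] + (t_y − 1)·[z,x] + (t_z − 1)·[x,y] = 0`
holds in the Alexander invariant `M = G'/G''`, written multiplicatively:
`(x[y,z]x⁻¹)[y,z]⁻¹ · (y[z,x]y⁻¹)[z,x]⁻¹ · (z[x,y]z⁻¹)[x,y]⁻¹ = 1`. -/
theorem statement2 {G : Type*} [Group G] (x y z : G) :
    Abelianization.of (⟨x * ⁅y, z⁆ * x⁻¹, conj_comm_mem'' x y z⟩ : commutator G) *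
      (Abelianization.of (⟨⁅y, z⁆, comm_mem'' y z⟩ : commutator G))⁻¹ *
    (Abelianization.of (⟨y * ⁅z, x⁆ * y⁻¹, conj_comm_mem'' y z x⟩ : commutator G) *
      (Abelianization.of (⟨⁅z, x⁆, comm_mem'' z x⟩ : commutator G))⁻¹) *
    (Abelianization.of (⟨z * ⁅x, y⁆ * z⁻¹, conj_comm_mem'' z x y⟩ : commutator G) *
      (Abelianization.of (⟨⁅x, y⁆, comm_mem'' x y⟩ : commutator G))⁻¹) = 1 := by
  set cA : commutator G := ⟨x * ⁅y, z⁆ * x⁻¹, conj_comm_mem'' x y z⟩ with hcA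
  set cB : commutator G := ⟨y * ⁅z, x⁆ * y⁻¹, conj_comm_mem'' y z x⟩ with hcB
  set cC : commutator G := ⟨z * ⁅x, y⁆ * z⁻¹, conj_comm_mem'' z x y⟩ with hcC
  set A' : commutator G := ⟨⁅y, z⁆, comm_mem'' y z⟩ with hA
  set B' : commutator G := ⟨⁅z, x⁆, comm_mem'' z x⟩ with hB
  set C' : commutator G := ⟨⁅x, y⁆, comm_mem'' x y⟩ with hC
  have key : cA * B'⁻¹ = C' * (cB⁻¹ * A') * C'⁻¹ * (C' * cC⁻¹) := by
    apply Subtype.ext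
    simp only [hcA, hcB, hcC, hA, hB, hC, Subgroup.coe_mul, InvMemClass.coe_inv]
    group
  have key' := congrArg Abelianization.of key
  simp only [map_mul, map_inv] at key'
  have hqA : Abelianization.of cA =
      Abelianization.of C' * ((Abelianization.of cB)⁻¹ * Abelianization.of A') *
        (Abelianization.of C')⁻¹ * (Abelianization.of C' * (Abelianization.of cC)⁻¹) *
        Abelianization.of B' := by
    rw [← key']; group
  rw [hqA]
  generalize Abelianization.of cB = b at *
  generalize Abelianization.of cC = c at *
  generalize Abelianization.of A' = a' at *
  generalize Abelianization.of B' = b' at *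
  generalize Abelianization.of C' = c' at *
  have hac : c' * (b⁻¹ * a') * c'⁻¹ * (c' * c⁻¹) * b' * a'⁻¹ * (b * b'⁻¹) * (c * c'⁻¹) =
      (a' * a'⁻¹) * ((b * b⁻¹) * ((b' * b'⁻¹) * ((c * c⁻¹) * ((c' * c'⁻¹) * (c' * c'⁻¹))))) := by
    ac_rfl
  rw [hac]
  simp
end

section
/- Let A_r be the (r choose 3) × (r choose 2) matrix over ℂ whose rows, indexed by triples 1 ≤ i < j < k ≤ r, have entry t_k − 1 in column (i,j), entry −(t_j − 1) in column (i,k), entry t_i − 1 in column (j,k), and 0 elsewhere, where t₁, …, t_r ∈ ℂ. If t_i ≠ 1 for all i, then rank A_r = ((r−1) choose 2). -/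
open Matrix

/-- The matrix of Jacobian relations of the free group `F_r`: rows indexed by triples
`i < j < k`, columns by pairs `a < b`, with entry `t_k − 1` in column `(i,j)`,
`−(t_j − 1)` in column `(i,k)`, `t_i − 1` in column `(j,k)`, and `0` elsewhere. -/
def jacobianMatrix (r : ℕ) (t : Fin r → ℂ) :
    Matrix {p : Fin r × Fin r × Fin r // p.1 < p.2.1 ∧ p.2.1 < p.2.2}
           {q : Fin r × Fin r // q.1 < q.2} ℂ :=
  fun row col =>
    let i := row.1.1; let j := row.1.2.1; let k := row.1.2.2
    let a := col.1.1; let b := col.1.2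
    if a = i ∧ b = j then t k - 1
    else if a = i ∧ b = k then -(t j - 1)
    else if a = j ∧ b = k then t i - 1
    else 0

abbrev JPairs (r : ℕ) := {q : Fin r × Fin r // q.1 < q.2}
abbrev JTrips (r : ℕ) := {p : Fin r × Fin r × Fin r // p.1 < p.2.1 ∧ p.2.1 < p.2.2}

lemma jac_mulVec {r : ℕ} (t : Fin r → ℂ) (v : JPairs r → ℂ) (row : JTrips r) :
    (jacobianMatrix r t).mulVec v row =
      (t row.1.2.2 - 1) * v ⟨(row.1.1, row.1.2.1), row.2.1⟩
      - (t row.1.2.1 - 1) * v ⟨(row.1.1, row.1.2.2), row.2.1.trans row.2.2⟩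
      + (t row.1.1 - 1) * v ⟨(row.1.2.1, row.1.2.2), row.2.2⟩ := by
  obtain ⟨⟨i, j, k⟩, hij, hjk⟩ := row
  have hij' : i < j := hij
  have hjk' : j < k := hjk
  have key : ∀ col : JPairs r, jacobianMatrix r t ⟨(i,j,k), hij, hjk⟩ col * v col =
      (if col = (⟨(i, j), hij⟩ : JPairs r) then (t k - 1) * v col else 0)
      + (if col = (⟨(i, k), hij.trans hjk⟩ : JPairs r) then (-(t j - 1)) * v col else 0)
      + (if col = (⟨(j, k), hjk⟩ : JPairs r) then (t i - 1) * v col else 0) := by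
    rintro ⟨⟨a, b⟩, hab⟩
    simp only [jacobianMatrix, Subtype.mk.injEq, Prod.mk.injEq]
    split_ifs <;> try ring
    all_goals exfalso
    all_goals casesm* _ ∧ _
    all_goals subst_vars
    all_goals first | exact absurd hij' (lt_irrefl _) | exact absurd hjk' (lt_irrefl _) | exact absurd (hij'.trans hjk') (lt_irrefl _)
  unfold mulVec dotProduct
  rw [Finset.sum_congr rfl (fun col _ => key col)]
  rw [Finset.sum_add_distrib, Finset.sum_add_distrib,
    Finset.sum_ite_eq' Finset.univ (⟨(i, j), hij⟩ : JPairs r),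
    Finset.sum_ite_eq' Finset.univ (⟨(i, k), hij.trans hjk⟩ : JPairs r),
    Finset.sum_ite_eq' Finset.univ (⟨(j, k), hjk⟩ : JPairs r)]
  simp only [Finset.mem_univ, if_true]
  ring

def jpairsToFinset (r : ℕ) : JPairs r → {s : Finset (Fin r) // s.card = 2} := fun q =>
  ⟨{q.1.1, q.1.2}, by
    rw [Finset.card_insert_of_notMem (by simp [q.2.ne]), Finset.card_singleton]⟩

lemma card_jpairs (r : ℕ) : Fintype.card (JPairs r) = r.choose 2 := by
  have hbij : Function.Bijective (jpairsToFinset r) := by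
    constructor
    · rintro ⟨⟨a, b⟩, hab⟩ ⟨⟨c, d⟩, hcd⟩ h
      simp only [jpairsToFinset, Subtype.mk.injEq] at h
      have hab' : a < b := hab
      have hcd' : c < d := hcd
      have ha : a = c ∨ a = d := by
        have : a ∈ ({c, d} : Finset (Fin r)) := h ▸ (by simp)
        simpa using this
      have hb : b = c ∨ b = d := by
        have : b ∈ ({c, d} : Finset (Fin r)) := h ▸ (by simp)
        simpa using this
      simp only [Subtype.mk.injEq, Prod.mk.injEq]
      rcases ha with rfl | rfl
      · rcases hb with rfl | rfl
        · exact absurd hab' (lt_irrefl _)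
        · exact ⟨rfl, rfl⟩
      · rcases hb with rfl | rfl
        · exact absurd (hcd'.trans hab') (lt_irrefl _)
        · exact absurd hab' (lt_irrefl _)
    · rintro ⟨s, hs⟩
      obtain ⟨a, b, hne, rfl⟩ := Finset.card_eq_two.mp hs
      rcases hne.lt_or_gt with h | h
      · exact ⟨⟨(a, b), h⟩, rfl⟩
      · exact ⟨⟨(b, a), h⟩, by simp [jpairsToFinset, Finset.pair_comm]⟩
  rw [Fintype.card_of_bijective hbij, Fintype.card_finset_len, Fintype.card_fin]

/-- The linear map whose range is the kernel of the Jacobian matrix. -/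
def phiMap (r : ℕ) (t : Fin r → ℂ) : (Fin r → ℂ) →ₗ[ℂ] (JPairs r → ℂ) where
  toFun s := fun q => (t q.1.1 - 1) * s q.1.2 - (t q.1.2 - 1) * s q.1.1
  map_add' s u := by funext q; simp only [Pi.add_apply]; ring
  map_smul' c s := by funext q; simp only [Pi.smul_apply, smul_eq_mul, RingHom.id_apply]; ring

lemma ker_eq_range (r : ℕ) (hr : 3 ≤ r) (t : Fin r → ℂ) (ht : ∀ i, t i ≠ 1) :
    LinearMap.ker (jacobianMatrix r t).mulVecLin = LinearMap.range (phiMap r t) := by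
  have hz : 0 < r := by omega
  set z : Fin r := ⟨0, hz⟩ with hzdef
  have hzne : t z - 1 ≠ 0 := sub_ne_zero.mpr (ht z)
  apply le_antisymm
  · intro v hv
    have hv' : ∀ row : JTrips r, (jacobianMatrix r t).mulVec v row = 0 := by
      intro row
      have := LinearMap.mem_ker.mp hv
      rw [Matrix.mulVecLin_apply] at this
      exact congrFun this row
    refine ⟨fun b => if h : z < b then v ⟨(z, b), h⟩ / (t z - 1) else 0, ?_⟩
    funext q
    obtain ⟨⟨a, b⟩, hab⟩ := q
    simp only [phiMap, LinearMap.coe_mk, AddHom.coe_mk]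
    by_cases ha : a = z
    · subst ha
      have hzb : z < b := hab
      have hna : ¬ z < z := lt_irrefl z
      rw [dif_pos hzb, dif_neg hna]
      field_simp
      simp
    · have hva : a.val ≠ 0 := fun h => ha (Fin.ext (by simp [hzdef, h]))
      have hza : z < a := by
        rw [Fin.lt_def]
        simp only [hzdef]
        omega
      have hzb : z < b := hza.trans hab
      rw [dif_pos hza, dif_pos hzb]
      have h0 := hv' ⟨(z, a, b), hza, hab⟩
      rw [jac_mulVec] at h0
      simp only at h0
      field_simp
      linear_combination (-1 : ℂ) * h0
  · rintro v ⟨s, rfl⟩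
    rw [LinearMap.mem_ker, Matrix.mulVecLin_apply]
    funext row
    simp only [Pi.zero_apply]
    rw [jac_mulVec]
    simp only [phiMap, LinearMap.coe_mk, AddHom.coe_mk]
    ring

lemma ker_phi (r : ℕ) (hr : 3 ≤ r) (t : Fin r → ℂ) (ht : ∀ i, t i ≠ 1) :
    LinearMap.ker (phiMap r t) = Submodule.span ℂ {fun i => t i - 1} := by
  have hz : 0 < r := by omega
  set z : Fin r := ⟨0, hz⟩ with hzdef
  have hzne : t z - 1 ≠ 0 := sub_ne_zero.mpr (ht z)
  apply le_antisymm
  · intro s hs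
    have hs' : ∀ q : JPairs r, (t q.1.1 - 1) * s q.1.2 - (t q.1.2 - 1) * s q.1.1 = 0 := by
      intro q
      have := LinearMap.mem_ker.mp hs
      exact congrFun this q
    rw [Submodule.mem_span_singleton]
    refine ⟨s z / (t z - 1), ?_⟩
    funext b
    simp only [Pi.smul_apply, smul_eq_mul]
    by_cases hb : b = z
    · subst hb; field_simp
    · have hvb : b.val ≠ 0 := fun h => hb (Fin.ext (by simp [hzdef, h]))
      have hzb : z < b := by
        rw [Fin.lt_def]
        simp only [hzdef]
        omega
      have h0 := hs' ⟨(z, b), hzb⟩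
      simp only at h0
      field_simp
      linear_combination (-1 : ℂ) * h0
  · rw [Submodule.span_le, Set.singleton_subset_iff]
    rw [SetLike.mem_coe, LinearMap.mem_ker]
    funext q
    simp only [phiMap, LinearMap.coe_mk, AddHom.coe_mk, Pi.zero_apply]
    ring


/-- if `t_i ≠ 1` for all `i`, then the matrix `A_r` of Jacobian relations
has rank `(r−1 choose 2)`. -/
theorem statement10 (r : ℕ) (hr : 3 ≤ r) (t : Fin r → ℂ) (ht : ∀ i, t i ≠ 1) :
    (jacobianMatrix r t).rank = (r - 1).choose 2 := by
  have hz : 0 < r := by omega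
  -- dimension of the kernel of phi
  have hkerphi : Module.finrank ℂ (LinearMap.ker (phiMap r t)) = 1 := by
    rw [ker_phi r hr t ht]
    apply finrank_span_singleton
    intro h
    exact (sub_ne_zero.mpr (ht ⟨0, hz⟩)) (congrFun h ⟨0, hz⟩)
  -- dimension of the range of phi
  have hrn := LinearMap.finrank_range_add_finrank_ker (phiMap r t)
  rw [hkerphi, Module.finrank_pi, Fintype.card_fin] at hrn
  -- rank-nullity for the matrix
  have hmat := LinearMap.finrank_range_add_finrank_ker (jacobianMatrix r t).mulVecLin
  rw [ker_eq_range r hr t ht, Module.finrank_pi, card_jpairs] at hmat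
  have hchoose : r.choose 2 = (r - 1).choose 2 + (r - 1) := by
    conv_lhs => rw [show r = (r - 1) + 1 from (by omega)]
    rw [Nat.choose_succ_succ, Nat.choose_one_right]
    simp only [show Nat.succ 1 = 2 from rfl]
    omega
  have hmat' : (jacobianMatrix r t).rank
      + Module.finrank ℂ ↥(LinearMap.range (phiMap r t)) = r.choose 2 := hmat
  omega
end

section
/- Let G be the free group on x₁, …, x_r with r ≥ 2. The quotient map G → G/G' induces a presentation of the module M = G'/G'' over ℤ[G/G'] ≅ ℤ[t₁^{±1},…,t_r^{±1}] generated by the classes of the commutators x_{ij} = [x_i, x_j] for 1 ≤ i < j ≤ r. -/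
open scoped commutatorElement

theorem conj_comm_mem15 {G : Type*} [Group G] (g a b : G) :
    g * ⁅a, b⁆ * g⁻¹ ∈ commutator G :=
  (Subgroup.commutator_normal ⊤ ⊤).conj_mem _
    (Subgroup.commutator_mem_commutator (Subgroup.mem_top a) (Subgroup.mem_top b)) g

/-- for the free group `G = F_r` (`r ≥ 2`), the Alexander invariant
`M = G'/G''` is generated, as a module over `ℤ[G/G'] ≅ ℤ[t₁^{±1},…,t_r^{±1}]` (where the
ring acts through conjugation by group elements), by the classes of the commutators
`x_{ij} = [x_i, x_j]`, `1 ≤ i < j ≤ r`: i.e. the classes of all conjugates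
`g[x_i,x_j]g⁻¹` generate `M = Abelianization G'` as a group. -/
theorem statement15 (r : ℕ) (hr : 2 ≤ r) :
    Subgroup.closure
      { v : Abelianization (commutator (FreeGroup (Fin r))) |
        ∃ (i j : Fin r) (g : FreeGroup (Fin r)), i < j ∧
          v = Abelianization.of
            ⟨g * ⁅FreeGroup.of i, FreeGroup.of j⁆ * g⁻¹,
              conj_comm_mem15 g (FreeGroup.of i) (FreeGroup.of j)⟩ } = ⊤ := by
  set G := FreeGroup (Fin r) with hG
  set S : Set (Abelianization (commutator G)) :=
    { v : Abelianization (commutator G) |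
        ∃ (i j : Fin r) (g : G), i < j ∧
          v = Abelianization.of
            ⟨g * ⁅FreeGroup.of i, FreeGroup.of j⁆ * g⁻¹,
              conj_comm_mem15 g (FreeGroup.of i) (FreeGroup.of j)⟩ } with hS
  set T : Set G := { x : G | ∃ (i j : Fin r) (g : G), i < j ∧
      x = g * ⁅FreeGroup.of i, FreeGroup.of j⁆ * g⁻¹ } with hTdef
  set N := Subgroup.closure T with hNdef
  -- N is invariant under conjugation
  have hconj : ∀ g : G, ∀ n ∈ N, g * n * g⁻¹ ∈ N := by
    intro g n hn
    induction hn using Subgroup.closure_induction with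
    | mem x hx =>
        obtain ⟨i, j, g', hij, rfl⟩ := hx
        have : g * (g' * ⁅FreeGroup.of i, FreeGroup.of j⁆ * g'⁻¹) * g⁻¹
            = (g * g') * ⁅FreeGroup.of i, FreeGroup.of j⁆ * (g * g')⁻¹ := by unfold G at *; group
        rw [this]
        exact Subgroup.subset_closure ⟨i, j, g * g', hij, rfl⟩
    | one => simpa +zetaDelta using one_mem N
    | mul x y hx hy ihx ihy =>
        have : g * (x * y) * g⁻¹ = (g * x * g⁻¹) * (g * y * g⁻¹) := by unfold G at *; group
        rw [this]; exact mul_mem ihx ihy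
    | inv x hx ih =>
        have : g * x⁻¹ * g⁻¹ = (g * x * g⁻¹)⁻¹ := by unfold G at *; group
        rw [this]; exact inv_mem ih
  -- basic commutators are in N
  have hbase : ∀ i j : Fin r, ⁅(FreeGroup.of i : G), FreeGroup.of j⁆ ∈ N := by
    have hlt : ∀ i j : Fin r, i < j → ⁅(FreeGroup.of i : G), FreeGroup.of j⁆ ∈ N := by
      intro i j hij
      have : ⁅(FreeGroup.of i : G), FreeGroup.of j⁆
          = (1 : G) * ⁅FreeGroup.of i, FreeGroup.of j⁆ * (1 : G)⁻¹ := by unfold G at *; group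
      rw [this]
      exact Subgroup.subset_closure ⟨i, j, 1, hij, rfl⟩
    intro i j
    rcases lt_trichotomy i j with h | h | h
    · exact hlt i j h
    · subst h
      have : ⁅(FreeGroup.of i : G), FreeGroup.of i⁆ = 1 := by group
      rw [this]; exact one_mem N
    · have : ⁅(FreeGroup.of i : G), FreeGroup.of j⁆
          = ⁅(FreeGroup.of j : G), FreeGroup.of i⁆⁻¹ := by group
      rw [this]; exact inv_mem (hlt j i h)
  -- commutators with a generator on the right
  have hgen : ∀ a : G, ∀ j : Fin r, ⁅a, (FreeGroup.of j : G)⁆ ∈ N := by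
    intro a
    induction a using FreeGroup.induction_on with
    | C1 => intro j; have : ⁅(1 : G), (FreeGroup.of j : G)⁆ = 1 := by group
            rw [this]; exact one_mem N
    | of i => intro j; exact hbase i j
    | inv_of i ih =>
        intro j
        show ⁅((FreeGroup.of i : G))⁻¹, (FreeGroup.of j : G)⁆ ∈ N
        have : ⁅((FreeGroup.of i : G))⁻¹, (FreeGroup.of j : G)⁆
            = (FreeGroup.of i)⁻¹ * ⁅(FreeGroup.of i : G), FreeGroup.of j⁆⁻¹ * ((FreeGroup.of i : G)⁻¹)⁻¹ := by
          group
        rw [this]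
        exact hconj _ _ (inv_mem (ih j))
    | mul x y ihx ihy =>
        intro j
        have : ⁅x * y, (FreeGroup.of j : G)⁆
            = (x * ⁅y, (FreeGroup.of j : G)⁆ * x⁻¹) * ⁅x, (FreeGroup.of j : G)⁆ := by group
        rw [this]
        exact mul_mem (hconj _ _ (ihy j)) (ihx j)
  -- all commutators
  have hall : ∀ b a : G, ⁅a, b⁆ ∈ N := by
    intro b
    induction b using FreeGroup.induction_on with
    | C1 => intro a; have : ⁅a, (1 : G)⁆ = 1 := by group
            rw [this]; exact one_mem N
    | of j => intro a; exact hgen a j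
    | inv_of j ih =>
        intro a
        show ⁅a, ((FreeGroup.of j : G))⁻¹⁆ ∈ N
        have : ⁅a, ((FreeGroup.of j : G))⁻¹⁆
            = (FreeGroup.of j)⁻¹ * ⁅a, (FreeGroup.of j : G)⁆⁻¹ * ((FreeGroup.of j : G)⁻¹)⁻¹ := by
          group
        rw [this]
        exact hconj _ _ (inv_mem (ih a))
    | mul x y ihx ihy =>
        intro a
        have : ⁅a, x * y⁆ = ⁅a, x⁆ * (x * ⁅a, y⁆ * x⁻¹) := by group
        rw [this]
        exact mul_mem (ihx a) (hconj _ _ (ihy a))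
  -- N equals the commutator subgroup
  have hA : N = commutator G := by
    apply le_antisymm
    · rw [hNdef]
      refine Subgroup.closure_le _ |>.2 ?_
      rintro x ⟨i, j, g, hij, rfl⟩
      exact conj_comm_mem15 g _ _
    · rw [commutator_eq_closure]
      refine Subgroup.closure_le _ |>.2 ?_
      rintro x ⟨a, b, rfl⟩
      exact hall b a
  -- push to the abelianization
  rw [eq_top_iff]
  rintro v -
  obtain ⟨x, rfl⟩ := QuotientGroup.mk_surjective (s := commutator ↥(commutator G)) v
  obtain ⟨x, hx⟩ := x
  have hx' : x ∈ N := hA.ge hx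
  exact Subgroup.closure_induction
    (p := fun y hy => Abelianization.of (⟨y, hA.le hy⟩ : ↥(commutator G)) ∈ Subgroup.closure S)
    (by rintro y ⟨i, j, g, hij, rfl⟩
        exact Subgroup.subset_closure ⟨i, j, g, hij, rfl⟩)
    (by convert one_mem (Subgroup.closure S); exact map_one _)
    (by intro y z hy hz py pz
        have : Abelianization.of (⟨y * z, hA.le (mul_mem hy hz)⟩ : ↥(commutator G))
            = Abelianization.of (⟨y, hA.le hy⟩ : ↥(commutator G))
              * Abelianization.of (⟨z, hA.le hz⟩ : ↥(commutator G)) := by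
          rw [← map_mul]; rfl
        rw [this]; exact mul_mem py pz)
    (by intro y hy py
        have : Abelianization.of (⟨y⁻¹, hA.le (inv_mem hy)⟩ : ↥(commutator G))
            = (Abelianization.of (⟨y, hA.le hy⟩ : ↥(commutator G)))⁻¹ := by
          rw [← map_inv]; rfl
        rw [this]; exact inv_mem py)
    hx'
end
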